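/- For all n ∈ ℕ and all k with n/2 < k ≤ n, we have κ(S_n) ≥ Σ_{ℓ=k}^{n} κ(S_{n-ℓ})/ℓ², where κ(S_m) denotes the probability that two independently uniformly random elements of the symmetric group S_m are conjugate (with κ(S_0) = 1). -/

import Mathlib

noncomputable def kappa (G : Type*) [Group G] : ℝ :=
  (Nat.card {p : G × G // IsConj p.1 p.2} : ℝ) / (Nat.card G : ℝ) ^ 2

/-- `κ(S_m)`, the probability that two independently uniformly random
permutations of an `m`-set are conjugate. -/
noncomputable def kappaS (m : ℕ) : ℝ := kappa (Equiv.Perm (Fin m))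


open Equiv Equiv.Perm Finset

/-- number of permutations of `Fin m` with cycle type `t` -/
def NN (m : ℕ) (t : Multiset ℕ) : ℕ :=
  (Finset.univ.filter fun g : Equiv.Perm (Fin m) => g.cycleType = t).card

/-- the set of cycle types of permutations of `Fin m` -/
def TT (m : ℕ) : Finset (Multiset ℕ) :=
  Finset.univ.image (fun g : Equiv.Perm (Fin m) => g.cycleType)

lemma card_pairs (m : ℕ) :
    (Finset.univ.filter fun p : Equiv.Perm (Fin m) × Equiv.Perm (Fin m) =>
      p.1.cycleType = p.2.cycleType).card = ∑ t ∈ TT m, NN m t * NN m t := by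
  classical
  rw [Finset.card_eq_sum_card_fiberwise (f := fun p => p.1.cycleType) (t := TT m)
    (fun p _ => Finset.mem_image_of_mem (fun g => g.cycleType) (Finset.mem_univ p.1))]
  refine Finset.sum_congr rfl fun t _ => ?_
  have h : ((Finset.univ.filter fun p : Equiv.Perm (Fin m) × Equiv.Perm (Fin m) =>
      p.1.cycleType = p.2.cycleType).filter fun p => p.1.cycleType = t) =
      (Finset.univ.filter fun g : Equiv.Perm (Fin m) => g.cycleType = t) ×ˢ
      (Finset.univ.filter fun g : Equiv.Perm (Fin m) => g.cycleType = t) := by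
    ext p
    simp only [Finset.mem_filter, Finset.mem_product, Finset.mem_univ, true_and]
    constructor
    · rintro ⟨h1, h2⟩
      exact ⟨h2, h2 ▸ h1.symm⟩
    · rintro ⟨h1, h2⟩
      exact ⟨h1.trans h2.symm, h1⟩
  rw [h, Finset.card_product]
  rfl

lemma kappaS_eq (m : ℕ) :
    kappaS m = ∑ t ∈ TT m, ((NN m t : ℝ) / (m.factorial : ℝ)) ^ 2 := by
  classical
  have hG : Nat.card (Equiv.Perm (Fin m)) = m.factorial := by
    rw [Nat.card_eq_fintype_card, Fintype.card_perm, Fintype.card_fin]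
  have hnum : Nat.card {p : Equiv.Perm (Fin m) × Equiv.Perm (Fin m) // IsConj p.1 p.2}
      = ∑ t ∈ TT m, NN m t * NN m t := by
    have e : {p : Equiv.Perm (Fin m) × Equiv.Perm (Fin m) // IsConj p.1 p.2} ≃
        {p : Equiv.Perm (Fin m) × Equiv.Perm (Fin m) // p.1.cycleType = p.2.cycleType} :=
      Equiv.subtypeEquivRight fun p => Equiv.Perm.isConj_iff_cycleType_eq
    rw [Nat.card_congr e, ← card_pairs m, Nat.card_eq_fintype_card, Fintype.card_subtype]
  rw [kappaS, kappa, hG, hnum]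
  push_cast
  rw [Finset.sum_div]
  refine Finset.sum_congr rfl fun t _ => ?_
  rw [div_pow, sq, sq]

lemma key_count (n ℓ : ℕ) (h2 : 2 ≤ ℓ) (hln : ℓ ≤ n) (hn2 : n < 2 * ℓ) (t : Multiset ℕ) :
    n.factorial * NN (n - ℓ) t ≤ NN n (t + {ℓ}) * (ℓ * (n - ℓ).factorial) := by
  classical
  set m := n - ℓ with hmdef
  have hmℓ : m + ℓ = n := by omega
  have hmm : m < ℓ := by omega
  let e1 : Fin m ≃ {i : Fin n // (i : ℕ) < m} :=
    { toFun := fun j => ⟨⟨(j : ℕ), lt_of_lt_of_le j.2 (by omega)⟩, j.2⟩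
      invFun := fun i => ⟨(i : ℕ), i.2⟩
      left_inv := fun j => rfl
      right_inv := fun i => rfl }
  let e2 : Fin ℓ ≃ {i : Fin n // ¬ (i : ℕ) < m} :=
    { toFun := fun j => ⟨⟨m + (j : ℕ), by have := j.2; omega⟩, by simp⟩
      invFun := fun i => ⟨(i : ℕ) - m, by have h1 := i.2; have h2 := i.1.2; simp at h1; omega⟩
      left_inv := fun j => Fin.ext (by simp)
      right_inv := fun i => Subtype.ext (Fin.ext (by have h1 := i.2; simp at h1 ⊢; omega)) }
  let c : Equiv.Perm (Fin n) := (finRotate ℓ).extendDomain e2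
  let ext1 : Equiv.Perm (Fin m) → Equiv.Perm (Fin n) := fun τ => τ.extendDomain e1
  have hsuppc : ∀ x : Fin n, x ∈ c.support ↔ ¬ (x : ℕ) < m := by
    intro x
    rw [Equiv.Perm.support_extend_domain, support_finRotate_of_le h2]
    constructor
    · rintro hx
      rw [Finset.mem_map] at hx
      obtain ⟨a, -, rfl⟩ := hx
      exact (e2 a).2
    · intro hx
      rw [Finset.mem_map]
      exact ⟨e2.symm ⟨x, hx⟩, Finset.mem_univ _, by simp⟩
  have hsuppext : ∀ (τ : Equiv.Perm (Fin m)) (x : Fin n), x ∈ (ext1 τ).support → (x : ℕ) < m := by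
    intro τ x hx
    rw [Equiv.Perm.support_extend_domain, Finset.mem_map] at hx
    obtain ⟨a, -, rfl⟩ := hx
    exact (e1 a).2
  have hdisj : ∀ τ, Equiv.Perm.Disjoint c (ext1 τ) := by
    intro τ
    rw [Equiv.Perm.disjoint_iff_disjoint_support, Finset.disjoint_left]
    intro x hx hx'
    exact (hsuppc x).mp hx (hsuppext τ x hx')
  have hccycle : c.IsCycle := (isCycle_finRotate_of_le h2).extendDomain e2
  have hccard : c.support.card = ℓ := by
    rw [Equiv.Perm.card_support_extend_domain, support_finRotate_of_le h2, Finset.card_univ,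
      Fintype.card_fin]
  have hctype : c.cycleType = {ℓ} := by
    rw [Equiv.Perm.cycleType_extendDomain, cycleType_finRotate_of_le h2]
  have hbase_type : ∀ τ : Equiv.Perm (Fin m), (c * ext1 τ).cycleType = τ.cycleType + {ℓ} := by
    intro τ
    rw [(hdisj τ).cycleType_mul, hctype, Equiv.Perm.cycleType_extendDomain, add_comm]
  have hext_inj : Function.Injective ext1 := by
    intro τ τ' h
    ext i
    have h1 : ext1 τ (e1 i) = ext1 τ' (e1 i) := by rw [h]
    rw [Equiv.Perm.extendDomain_apply_image, Equiv.Perm.extendDomain_apply_image] at h1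
    exact congrArg Fin.val (e1.injective (Subtype.coe_injective h1))
  let S : Finset (Equiv.Perm (Fin n) × Equiv.Perm (Fin m)) :=
    Finset.univ.filter fun q => q.2.cycleType = t
  let C : Finset (Equiv.Perm (Fin n)) := Finset.univ.filter fun σ => σ.cycleType = t + {ℓ}
  let F : Equiv.Perm (Fin n) × Equiv.Perm (Fin m) → Equiv.Perm (Fin n) :=
    fun q => q.1 * (c * ext1 q.2) * q.1⁻¹
  have hcardS : S.card = n.factorial * NN m t := by
    have hSeq : S = Finset.univ ×ˢ
        (Finset.univ.filter fun τ : Equiv.Perm (Fin m) => τ.cycleType = t) := by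
      ext q
      simp [S, Finset.mem_product]
    rw [hSeq, Finset.card_product, Finset.card_univ, Fintype.card_perm, Fintype.card_fin]
    rfl
  have hFC : ∀ q ∈ S, F q ∈ C := by
    intro q hq
    simp only [S, Finset.mem_filter, Finset.mem_univ, true_and] at hq
    simp only [C, F, Finset.mem_filter, Finset.mem_univ, true_and]
    rw [Equiv.Perm.cycleType_conj, hbase_type, hq]
  have hfiber : ∀ σ ∈ C, (S.filter fun q => F q = σ).card ≤ ℓ * m.factorial := by
    intro σ hσ
    rcases Finset.eq_empty_or_nonempty (S.filter fun q => F q = σ) with he | hne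
    · simp [he]
    obtain ⟨q₀, hq₀⟩ := hne
    have hconjfac : ∀ q : Equiv.Perm (Fin n) × Equiv.Perm (Fin m),
        q.1 * (c * ext1 q.2) * q.1⁻¹ = σ → q.1 * c * q.1⁻¹ ∈ σ.cycleFactorsFinset := by
      intro q hq
      rw [Equiv.Perm.mem_cycleFactorsFinset_iff]
      refine ⟨hccycle.conj, ?_⟩
      intro a ha
      rw [Equiv.Perm.support_conj, Finset.mem_map] at ha
      obtain ⟨x, hx, rfl⟩ := ha
      have hxfix : ext1 q.2 x = x := by
        by_contra hne'
        exact (hsuppc x).mp hx (hsuppext q.2 x (Equiv.Perm.mem_support.mpr hne'))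
      rw [← hq]
      simp only [Equiv.toEmbedding_apply, Equiv.Perm.coe_mul, Function.comp_apply,
        Equiv.Perm.inv_def, Equiv.symm_apply_apply, Equiv.Perm.mul_apply]
      rw [hxfix]
    have huniq : ∀ d d', d ∈ σ.cycleFactorsFinset → d' ∈ σ.cycleFactorsFinset →
        d.support.card = ℓ → d'.support.card = ℓ → d = d' := by
      intro d d' hd hd' hcd hcd'
      by_contra hne'
      have hsub : ({d, d'} : Finset (Equiv.Perm (Fin n))) ⊆ σ.cycleFactorsFinset := by
        intro x hx
        simp only [Finset.mem_insert, Finset.mem_singleton] at hx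
        rcases hx with rfl | rfl <;> assumption
      have hsum : ∑ f ∈ ({d, d'} : Finset (Equiv.Perm (Fin n))), f.support.card ≤
          ∑ f ∈ σ.cycleFactorsFinset, f.support.card :=
        Finset.sum_le_sum_of_subset hsub
      rw [Finset.sum_pair hne', hcd, hcd'] at hsum
      have hsum2 : ∑ f ∈ σ.cycleFactorsFinset, f.support.card = σ.support.card := by
        rw [← Equiv.Perm.sum_cycleType σ, Equiv.Perm.cycleType_def]
        rfl
      have hbound : σ.support.card ≤ n := by
        simpa using Finset.card_le_univ σ.support
      omega
    simp only [Finset.mem_filter] at hq₀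
    set d : Equiv.Perm (Fin n) := q₀.1 * c * q₀.1⁻¹ with hd
    have hdmem : d ∈ σ.cycleFactorsFinset := hconjfac q₀ hq₀.2
    have hdcard : d.support.card = ℓ := by
      rw [hd, Equiv.Perm.support_conj, Finset.card_map, hccard]
    have hdall : ∀ q ∈ S.filter (fun q => F q = σ), q.1 * c * q.1⁻¹ = d := by
      intro q hq
      simp only [Finset.mem_filter] at hq
      exact huniq _ _ (hconjfac q hq.2) hdmem
        (by rw [Equiv.Perm.support_conj, Finset.card_map, hccard]) hdcard
    have hmemd : ∀ q ∈ S.filter (fun q => F q = σ), ∀ x : Fin n,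
        (q.1 x ∈ d.support ↔ x ∈ c.support) := by
      intro q hq x
      rw [← hdall q hq, Equiv.Perm.support_conj, Finset.mem_map_equiv]
      simp
    have h0 : (0 : ℕ) < ℓ := by omega
    let z : Fin n := ((e2 ⟨0, h0⟩ : {i : Fin n // ¬ (i : ℕ) < m}) : Fin n)
    have hz : z ∈ c.support := (hsuppc z).mpr (e2 ⟨0, h0⟩).2
    -- target finset
    let E : Finset (Fin m → Fin n) :=
      Finset.univ.filter fun f => Function.Injective f ∧ ∀ i, f i ∉ d.support
    have hcardE : E.card = m.factorial := by
      have hbij : E.card = Fintype.card (Fin m ↪ {x : Fin n // x ∉ d.support}) := by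
        rw [← Finset.card_univ]
        refine Finset.card_bij'
          (fun f hf => (⟨fun x => ⟨f x, ((Finset.mem_filter.mp hf).2.2) x⟩,
            fun x y hxy => (Finset.mem_filter.mp hf).2.1 (congrArg Subtype.val hxy)⟩ :
              Fin m ↪ {x : Fin n // x ∉ d.support}))
          (fun g _ => fun x => (g x : Fin n))
          (fun f hf => Finset.mem_univ _) (fun g hg => ?_) (fun f hf => rfl) (fun g hg => ?_)
        · simp only [E, Finset.mem_filter, Finset.mem_univ, true_and]
          exact ⟨fun x y hxy => g.injective (Subtype.coe_injective hxy), fun i => (g i).2⟩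
        · rfl
      rw [hbij, Fintype.card_embedding_eq, Fintype.card_fin]
      have hcompl : Fintype.card {x : Fin n // x ∉ d.support} = m := by
        rw [Fintype.card_subtype_compl, Fintype.card_fin, Fintype.card_coe, hdcard]
      rw [hcompl, Nat.descFactorial_self]
    -- the injection
    have hinj : (S.filter (fun q => F q = σ)).card ≤ (d.support ×ˢ E).card := by
      apply Finset.card_le_card_of_injOn (fun q => (q.1 z, fun i => q.1 ((e1 i : Fin n))))
      · intro q hq
        rw [Finset.mem_coe, Finset.mem_product]
        constructor
        · exact (hmemd q hq z).mpr hz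
        · simp only [E, Finset.mem_filter, Finset.mem_univ, true_and]
          constructor
          · intro x y hxy
            exact e1.injective (Subtype.coe_injective (q.1.injective hxy))
          · intro i hi
            have : ((e1 i : Fin n)) ∈ c.support := (hmemd q hq _).mp hi
            exact (hsuppc _).mp this (e1 i).2
      · intro q hq q' hq' heq
        simp only [Prod.mk.injEq] at heq
        obtain ⟨hz1, hfun⟩ := heq
        have hq1 : q.1 * c * q.1⁻¹ = d := hdall q (Finset.mem_coe.mp hq)
        have hq1' : q'.1 * c * q'.1⁻¹ = d := hdall q' (Finset.mem_coe.mp hq')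
        have hzpow : ∀ (g : Equiv.Perm (Fin n)), g * c * g⁻¹ = d →
            ∀ (i : ℤ) (x : Fin n), g ((c ^ i) x) = (d ^ i) (g x) := by
          intro g hg i x
          have h1 : g * c ^ i * g⁻¹ = d ^ i := by
            rw [← hg]
            simpa only [MulAut.conj_apply] using map_zpow (MulAut.conj g) c i
          have := congrArg (fun (u : Equiv.Perm (Fin n)) => u (g x)) h1
          simp only [Equiv.Perm.coe_mul, Function.comp_apply, Equiv.Perm.inv_def, Equiv.symm_apply_apply] at this
          simpa using this
        have hfst : q.1 = q'.1 := by
          ext x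
          by_cases hx : (x : ℕ) < m
          · have hxe : ((e1 (e1.symm ⟨x, hx⟩) : {i : Fin n // (i : ℕ) < m}) : Fin n) = x := by
              simp
            have := congrFun hfun (e1.symm ⟨x, hx⟩)
            rw [hxe] at this
            exact congrArg (fun y : Fin n => (y : ℕ)) this
          · have hxs : x ∈ c.support := (hsuppc x).mpr hx
            obtain ⟨i, hi⟩ := hccycle.sameCycle (Equiv.Perm.mem_support.mp hz)
              (Equiv.Perm.mem_support.mp hxs)
            have e1' := hzpow q.1 hq1 i z
            have e2' := hzpow q'.1 hq1' i z
            rw [hi] at e1' e2'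
            rw [e1', e2', hz1]
        have hsnd : q.2 = q'.2 := by
          simp only [Finset.mem_coe, Finset.mem_filter] at hq hq'
          have hFF : F q = F q' := by rw [hq.2, hq'.2]
          simp only [F, hfst] at hFF
          have h2' : c * ext1 q.2 = c * ext1 q'.2 := mul_left_cancel (mul_right_cancel hFF)
          exact hext_inj (mul_left_cancel h2')
        exact Prod.ext hfst hsnd
    have : (d.support ×ˢ E).card = ℓ * m.factorial := by
      rw [Finset.card_product, hdcard, hcardE]
    omega
  calc n.factorial * NN m t = S.card := hcardS.symm
    _ = ∑ σ ∈ C, (S.filter fun q => F q = σ).card := Finset.card_eq_sum_card_fiberwise hFC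
    _ ≤ ∑ _σ ∈ C, (ℓ * m.factorial) := Finset.sum_le_sum hfiber
    _ = C.card * (ℓ * m.factorial) := by rw [Finset.sum_const, smul_eq_mul]
    _ = NN n (t + {ℓ}) * (ℓ * m.factorial) := by
        simp only [C, NN]

lemma kappaS_of_le_one (m : ℕ) (hm : m ≤ 1) : kappaS m = 1 := by
  haveI : Subsingleton (Fin m) := by
    rcases Nat.le_one_iff_eq_zero_or_eq_one.mp hm with rfl | rfl <;> infer_instance
  haveI : Unique (Equiv.Perm (Fin m)) := Equiv.permUnique
  have h1 : Nat.card (Equiv.Perm (Fin m)) = 1 := Nat.card_unique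
  have h2 : Nat.card {p : Equiv.Perm (Fin m) × Equiv.Perm (Fin m) // IsConj p.1 p.2} = 1 := by
    haveI : Nonempty {p : Equiv.Perm (Fin m) × Equiv.Perm (Fin m) // IsConj p.1 p.2} :=
      ⟨⟨(1, 1), IsConj.refl 1⟩⟩
    exact Nat.card_unique
  rw [kappaS, kappa, h1, h2]
  norm_num

lemma TT_facts {M : ℕ} {t : Multiset ℕ} (ht : t ∈ TT M) :
    t.sum ≤ M ∧ ∀ a ∈ t, 2 ≤ a := by
  rw [TT, Finset.mem_image] at ht
  obtain ⟨τ, -, rfl⟩ := ht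
  constructor
  · rw [Equiv.Perm.sum_cycleType]
    simpa using Finset.card_le_univ τ.support
  · exact fun a ha => Equiv.Perm.two_le_of_mem_cycleType ha

theorem kappaS_lower_recurrence (n k : ℕ) (hk : n < 2 * k) (hkn : k ≤ n) :
    ∑ ℓ ∈ Finset.Icc k n, kappaS (n - ℓ) / (ℓ : ℝ) ^ 2 ≤ kappaS n := by
  classical
  rcases Nat.lt_or_ge n 2 with hn1 | hn2
  · have hn : n = 1 := by omega
    have hk1 : k = 1 := by omega
    subst hn
    subst hk1
    rw [Finset.Icc_self, Finset.sum_singleton]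
    norm_num [kappaS_of_le_one]
  · have hk2 : 2 ≤ k := by omega
    have hstep : ∀ ℓ ∈ Finset.Icc k n, kappaS (n - ℓ) / (ℓ : ℝ) ^ 2 =
        ∑ t ∈ TT (n - ℓ), ((NN (n - ℓ) t : ℝ) / (((n - ℓ).factorial : ℝ) * ℓ)) ^ 2 := by
      intro ℓ hℓ
      rw [kappaS_eq, Finset.sum_div]
      refine Finset.sum_congr rfl fun t _ => ?_
      rw [div_pow, div_div, ← mul_pow, ← div_pow]
    rw [Finset.sum_congr rfl hstep, Finset.sum_sigma']
    have hmem : ∀ p ∈ (Finset.Icc k n).sigma (fun ℓ => TT (n - ℓ)),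
        2 ≤ p.1 ∧ p.1 ≤ n ∧ n < 2 * p.1 ∧ p.2.sum ≤ n - p.1 ∧ ∀ a ∈ p.2, 2 ≤ a := by
      intro p hp
      rw [Finset.mem_sigma, Finset.mem_Icc] at hp
      obtain ⟨⟨hp1, hp2⟩, hp3⟩ := hp
      obtain ⟨hsum, hent⟩ := TT_facts hp3
      exact ⟨by omega, hp2, by omega, hsum, hent⟩
    calc ∑ p ∈ (Finset.Icc k n).sigma (fun ℓ => TT (n - ℓ)),
          ((NN (n - p.1) p.2 : ℝ) / (((n - p.1).factorial : ℝ) * p.1)) ^ 2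
        ≤ ∑ p ∈ (Finset.Icc k n).sigma (fun ℓ => TT (n - ℓ)),
          ((NN n (p.2 + {p.1}) : ℝ) / (n.factorial : ℝ)) ^ 2 := by
          apply Finset.sum_le_sum
          intro p hp
          obtain ⟨h2ℓ, hℓn, hn2ℓ, -, -⟩ := hmem p hp
          have hkey := key_count n p.1 h2ℓ hℓn hn2ℓ p.2
          have hb : (0 : ℝ) < ((n - p.1).factorial : ℝ) * p.1 := by positivity
          have hd : (0 : ℝ) < (n.factorial : ℝ) := by positivity
          apply pow_le_pow_left₀ (by positivity)
          rw [div_le_div_iff₀ hb hd]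
          calc (NN (n - p.1) p.2 : ℝ) * (n.factorial : ℝ)
              = ((n.factorial * NN (n - p.1) p.2 : ℕ) : ℝ) := by push_cast; ring
            _ ≤ ((NN n (p.2 + {p.1}) * (p.1 * (n - p.1).factorial) : ℕ) : ℝ) :=
                Nat.cast_le.mpr hkey
            _ = (NN n (p.2 + {p.1}) : ℝ) * (((n - p.1).factorial : ℝ) * p.1) := by
                push_cast; ring
      _ = ∑ u ∈ ((Finset.Icc k n).sigma (fun ℓ => TT (n - ℓ))).image
            (fun p => p.2 + {p.1}), ((NN n u : ℝ) / (n.factorial : ℝ)) ^ 2 := by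
          rw [Finset.sum_image]
          intro p hp p' hp' h
          beta_reduce at h
          obtain ⟨h2ℓ, hℓn, hn2ℓ, hsum, -⟩ := hmem p hp
          obtain ⟨h2ℓ', hℓn', hn2ℓ', hsum', -⟩ := hmem p' hp'
          rw [Finset.mem_coe, Finset.mem_sigma, Finset.mem_Icc] at hp hp'
          have h1 : p.1 = p'.1 := by
            by_contra hne
            have hmem' : p'.1 ∈ p.2 + {p.1} := by
              rw [h]
              simp
            rw [Multiset.mem_add] at hmem'
            rcases hmem' with hmem' | hmem'
            · obtain ⟨s, hs⟩ := Multiset.exists_cons_of_mem hmem'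
              have : p'.1 ≤ p.2.sum := by
                rw [hs, Multiset.sum_cons]
                omega
              have hk1 := hp.1.1
              have hk2' := hp'.1.1
              omega
            · rw [Multiset.mem_singleton] at hmem'
              exact hne hmem'.symm
          have h2 : p.2 = p'.2 := by
            rw [h1] at h
            exact add_right_cancel h
          exact Sigma.ext h1 (heq_of_eq h2)
      _ ≤ ∑ u ∈ TT n, ((NN n u : ℝ) / (n.factorial : ℝ)) ^ 2 := by
          apply Finset.sum_le_sum_of_subset_of_nonneg
          · intro u hu
            rw [Finset.mem_image] at hu
            obtain ⟨p, hp, rfl⟩ := hu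
            obtain ⟨h2ℓ, hℓn, hn2ℓ, hsum, hent⟩ := hmem p hp
            have hcond : (p.2 + {p.1}).sum ≤ Fintype.card (Fin n) ∧
                ∀ a ∈ p.2 + {p.1}, 2 ≤ a := by
              constructor
              · rw [Multiset.sum_add, Multiset.sum_singleton, Fintype.card_fin]
                omega
              · intro a ha
                rw [Multiset.mem_add] at ha
                rcases ha with ha | ha
                · exact hent a ha
                · rw [Multiset.mem_singleton] at ha
                  omega
            obtain ⟨g, hg⟩ := (Equiv.Perm.exists_with_cycleType_iff (α := Fin n)).mpr hcond
            rw [TT, Finset.mem_image]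
            exact ⟨g, Finset.mem_univ g, hg⟩
          · exact fun _ _ _ => sq_nonneg _
      _ = kappaS n := (kappaS_eq n).symm
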